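/- Under Assumption (lander footprint inscribed in the landing-leg polygon): if z̄_L − z_L < h₀·sin(s̄) and z̄_U − z_L < r̄, then for every lander orientation θ the landing-plane slope s(θ) satisfies s(θ) < s̄ and the roughness satisfies r(θ,γ) < r̄ for all γ in the footprint. Here z̄_L, z_L are the max and min terrain elevation over the union of all possible landing-leg contact regions, z̄_U is the max elevation over the union of all possible lander footprints, and h₀ is the minimum altitude over all triangles formed by any three landing legs. -/

import Mathlib

open Real

lemma key_case (t1 t2 t3 s1 s2 s3 T S : ℝ) (h12 : t1 ≤ t2) (h23 : t2 ≤ t3)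
    (hT : t3 - t1 ≤ T) (hS12 : |s1 - s2| ≤ S) (hS23 : |s2 - s3| ≤ S) :
    |(t2 - t1) * (s3 - s1) - (s2 - s1) * (t3 - t1)| ≤ T * S := by
  have hS : 0 ≤ S := le_trans (abs_nonneg _) hS12
  have e : (t2 - t1) * (s3 - s1) - (s2 - s1) * (t3 - t1)
      = (t2 - t1) * (s3 - s2) - (s2 - s1) * (t3 - t2) := by ring
  rw [e]
  have h1 : |(t2 - t1) * (s3 - s2)| ≤ (t2 - t1) * S := by
    rw [abs_mul, abs_of_nonneg (by linarith : (0:ℝ) ≤ t2 - t1)]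
    exact mul_le_mul_of_nonneg_left (by rwa [abs_sub_comm]) (by linarith)
  have h2 : |(s2 - s1) * (t3 - t2)| ≤ S * (t3 - t2) := by
    rw [abs_mul, abs_of_nonneg (by linarith : (0:ℝ) ≤ t3 - t2)]
    exact mul_le_mul_of_nonneg_right (by rwa [abs_sub_comm]) (by linarith)
  calc |(t2 - t1) * (s3 - s2) - (s2 - s1) * (t3 - t2)|
      ≤ |(t2 - t1) * (s3 - s2)| + |(s2 - s1) * (t3 - t2)| := abs_sub _ _
    _ ≤ (t2 - t1) * S + S * (t3 - t2) := add_le_add h1 h2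
    _ ≤ T * S := by nlinarith

lemma median_det (t1 t2 t3 s1 s2 s3 T S : ℝ)
    (hT12 : |t1 - t2| ≤ T) (hT13 : |t1 - t3| ≤ T) (hT23 : |t2 - t3| ≤ T)
    (hS12 : |s1 - s2| ≤ S) (hS13 : |s1 - s3| ≤ S) (hS23 : |s2 - s3| ≤ S) :
    |(t2 - t1) * (s3 - s1) - (s2 - s1) * (t3 - t1)| ≤ T * S := by
  rw [abs_le] at hT12 hT13 hT23
  have e21 : |s2 - s1| ≤ S := by rwa [abs_sub_comm]
  have e31 : |s3 - s1| ≤ S := by rwa [abs_sub_comm]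
  have e32 : |s3 - s2| ≤ S := by rwa [abs_sub_comm]
  rcases le_total t1 t2 with h12 | h12 <;> rcases le_total t2 t3 with h23 | h23 <;>
    rcases le_total t1 t3 with h13 | h13
  -- (1,2,3)
  · exact key_case t1 t2 t3 s1 s2 s3 T S h12 h23 (by linarith) hS12 hS23
  · exact key_case t1 t2 t3 s1 s2 s3 T S h12 h23 (by linarith) hS12 hS23
  -- t1≤t2, t3≤t2, t1≤t3 : order (1,3,2)
  · have h := key_case t1 t3 t2 s1 s3 s2 T S h13 h23 (by linarith) hS13 e32
    rw [show (t3 - t1) * (s2 - s1) - (s3 - s1) * (t2 - t1)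
        = -((t2 - t1) * (s3 - s1) - (s2 - s1) * (t3 - t1)) from by ring, abs_neg] at h
    exact h
  -- t1≤t2, t3≤t2, t3≤t1 : order (3,1,2)
  · have h := key_case t3 t1 t2 s3 s1 s2 T S h13 h12 (by linarith) (by rwa [abs_sub_comm]) hS12
    rw [show (t1 - t3) * (s2 - s3) - (s1 - s3) * (t2 - t3)
        = (t2 - t1) * (s3 - s1) - (s2 - s1) * (t3 - t1) from by ring] at h
    exact h
  -- t2≤t1, t2≤t3, t1≤t3 : order (2,1,3)
  · have h := key_case t2 t1 t3 s2 s1 s3 T S h12 h13 (by linarith) e21 hS13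
    rw [show (t1 - t2) * (s3 - s2) - (s1 - s2) * (t3 - t2)
        = -((t2 - t1) * (s3 - s1) - (s2 - s1) * (t3 - t1)) from by ring, abs_neg] at h
    exact h
  -- t2≤t1, t2≤t3, t3≤t1 : order (2,3,1)
  · have h := key_case t2 t3 t1 s2 s3 s1 T S h23 h13 (by linarith) hS23 (by rwa [abs_sub_comm])
    rw [show (t3 - t2) * (s1 - s2) - (s3 - s2) * (t1 - t2)
        = (t2 - t1) * (s3 - s1) - (s2 - s1) * (t3 - t1) from by ring] at h
    exact h
  -- t2≤t1, t3≤t2, t1≤t3 : all equal, use (2,1,3)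
  · have h := key_case t2 t1 t3 s2 s1 s3 T S h12 h13 (by linarith) e21 hS13
    rw [show (t1 - t2) * (s3 - s2) - (s1 - s2) * (t3 - t2)
        = -((t2 - t1) * (s3 - s1) - (s2 - s1) * (t3 - t1)) from by ring, abs_neg] at h
    exact h
  -- t2≤t1, t3≤t2, t3≤t1 : order (3,2,1)
  · have h := key_case t3 t2 t1 s3 s2 s1 T S h23 h12 (by linarith) e32 e21
    rw [show (t2 - t3) * (s1 - s3) - (s2 - s3) * (t1 - t3)
        = -((t2 - t1) * (s3 - s1) - (s2 - s1) * (t3 - t1)) from by ring, abs_neg] at h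
    exact h

lemma cauchy2 (a b u v : ℝ) :
    |a * v - b * u| ≤ Real.sqrt (a ^ 2 + b ^ 2) * Real.sqrt (u ^ 2 + v ^ 2) := by
  rw [← Real.sqrt_mul (by positivity), ← Real.sqrt_sq_eq_abs]
  apply Real.sqrt_le_sqrt
  nlinarith [sq_nonneg (a * u + b * v)]

lemma alt_dist (P Q R : EuclideanSpace ℝ (Fin 2)) (h₀ : ℝ) (h0 : 0 ≤ h₀)
    (h : h₀ ≤ Metric.infDist P (affineSpan ℝ {Q, R} : Set (EuclideanSpace ℝ (Fin 2)))) :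
    h₀ * Real.sqrt ((Q 0 - R 0) ^ 2 + (Q 1 - R 1) ^ 2) ≤
      |(Q 0 - P 0) * (R 1 - P 1) - (Q 1 - P 1) * (R 0 - P 0)| := by
  set D2 : ℝ := (Q 0 - R 0) ^ 2 + (Q 1 - R 1) ^ 2 with hD2
  rcases eq_or_lt_of_le (by positivity : (0:ℝ) ≤ D2) with hz | hz
  · have h0' : Real.sqrt D2 = 0 := by rw [← hz, Real.sqrt_zero]
    have hq0 : Q 0 = R 0 := by nlinarith [sq_nonneg (Q 0 - R 0), sq_nonneg (Q 1 - R 1)]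
    have hq1 : Q 1 = R 1 := by nlinarith [sq_nonneg (Q 0 - R 0), sq_nonneg (Q 1 - R 1)]
    rw [h0']
    simp [hq0, hq1]
  · set τ : ℝ := ((P 0 - Q 0) * (R 0 - Q 0) + (P 1 - Q 1) * (R 1 - Q 1)) / D2 with hτ
    have hmem : AffineMap.lineMap Q R τ ∈ (affineSpan ℝ {Q, R} : Set (EuclideanSpace ℝ (Fin 2))) :=
      AffineMap.lineMap_mem_affineSpan_pair τ Q R
    have hle : h₀ ≤ dist P (AffineMap.lineMap Q R τ) :=
      h.trans (Metric.infDist_le_dist_of_mem hmem)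
    have hco : ∀ i : Fin 2, (AffineMap.lineMap Q R τ : EuclideanSpace ℝ (Fin 2)) i
        = Q i + τ * (R i - Q i) := by
      intro i
      simp [AffineMap.lineMap_apply, PiLp.add_apply, PiLp.smul_apply, PiLp.sub_apply,
        smul_eq_mul]
      ring
    have hdist : dist P (AffineMap.lineMap Q R τ)
        = Real.sqrt ((P 0 - (Q 0 + τ * (R 0 - Q 0))) ^ 2 + (P 1 - (Q 1 + τ * (R 1 - Q 1))) ^ 2) := by
      rw [EuclideanSpace.dist_eq, Fin.sum_univ_two, hco 0, hco 1]
      simp [Real.dist_eq, sq_abs]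
    rw [hdist] at hle
    have hsq : h₀ ^ 2 ≤ (P 0 - (Q 0 + τ * (R 0 - Q 0))) ^ 2 + (P 1 - (Q 1 + τ * (R 1 - Q 1))) ^ 2 := by
      exact (Real.le_sqrt h0 (by positivity)).mp hle
    have key : ((P 0 - (Q 0 + τ * (R 0 - Q 0))) ^ 2 + (P 1 - (Q 1 + τ * (R 1 - Q 1))) ^ 2) * D2
        = ((Q 0 - P 0) * (R 1 - P 1) - (Q 1 - P 1) * (R 0 - P 0)) ^ 2 := by
      rw [hτ]
      field_simp
      ring
    have h2 : h₀ ^ 2 * D2 ≤ ((Q 0 - P 0) * (R 1 - P 1) - (Q 1 - P 1) * (R 0 - P 0)) ^ 2 := by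
      rw [← key]; exact mul_le_mul_of_nonneg_right hsq hz.le
    calc h₀ * Real.sqrt D2 = Real.sqrt (h₀ ^ 2 * D2) := by
          rw [Real.sqrt_mul (by positivity), Real.sqrt_sq h0]
      _ ≤ Real.sqrt (((Q 0 - P 0) * (R 1 - P 1) - (Q 1 - P 1) * (R 0 - P 0)) ^ 2) :=
          Real.sqrt_le_sqrt h2
      _ = _ := Real.sqrt_sq_eq_abs _

lemma div_sqrt_le_one (A B C : ℝ) (hC : 0 < C) :
    C / Real.sqrt (A ^ 2 + B ^ 2 + C ^ 2) ≤ 1 := by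
  have h0 : 0 < Real.sqrt (A ^ 2 + B ^ 2 + C ^ 2) := Real.sqrt_pos.2 (by positivity)
  rw [div_le_one h0]
  nlinarith [Real.sq_sqrt (show (0:ℝ) ≤ A ^ 2 + B ^ 2 + C ^ 2 by positivity), h0,
    sq_nonneg A, sq_nonneg B]

lemma cos_lt_div (A B C co si : ℝ) (hC : 0 < C) (hco : 0 ≤ co)
    (hpy : si ^ 2 + co ^ 2 = 1) (hm : Real.sqrt (A ^ 2 + B ^ 2) < C * si) :
    co < C / Real.sqrt (A ^ 2 + B ^ 2 + C ^ 2) := by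
  have h0 : 0 < Real.sqrt (A ^ 2 + B ^ 2 + C ^ 2) := Real.sqrt_pos.2 (by positivity)
  have ht : Real.sqrt (A ^ 2 + B ^ 2 + C ^ 2) ^ 2 = A ^ 2 + B ^ 2 + C ^ 2 :=
    Real.sq_sqrt (by positivity)
  have hm2 : A ^ 2 + B ^ 2 < C ^ 2 * si ^ 2 := by
    nlinarith [hm, Real.sqrt_nonneg (A ^ 2 + B ^ 2),
      Real.sq_sqrt (show (0:ℝ) ≤ A ^ 2 + B ^ 2 by positivity)]
  have hco2 : co ^ 2 ≤ 1 := by nlinarith [sq_nonneg si]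
  rw [lt_div_iff₀ h0]
  set t := Real.sqrt (A ^ 2 + B ^ 2 + C ^ 2)
  have key : (co * t) ^ 2 < C ^ 2 := by
    calc (co * t) ^ 2 = co ^ 2 * (A ^ 2 + B ^ 2) + co ^ 2 * C ^ 2 := by
          rw [mul_pow, ht]; ring
      _ ≤ 1 * (A ^ 2 + B ^ 2) + co ^ 2 * C ^ 2 := by
          have := mul_le_mul_of_nonneg_right hco2 (show (0:ℝ) ≤ A ^ 2 + B ^ 2 by positivity)
          linarith
      _ < C ^ 2 * si ^ 2 + co ^ 2 * C ^ 2 := by linarith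
      _ = C ^ 2 := by linear_combination C ^ 2 * hpy
  calc co * t = Real.sqrt ((co * t) ^ 2) := (Real.sqrt_sq (by positivity)).symm
    _ < Real.sqrt (C ^ 2) := Real.sqrt_lt_sqrt (by positivity) key
    _ = C := Real.sqrt_sq hC.le


set_option maxHeartbeats 1000000 in
/-- Proposition 2 (conservativeness of the height-difference HD test).
Under the assumption that the lander footprint is inscribed in the landing-leg
polygon, if `z̄_L − z_L < h₀ sin s̄` and `z̄_U − z_L < r̄`, then for every
orientation `θ` the landing-plane slope satisfies `s(θ) < s̄` and the
roughness satisfies `r(θ,γ) < r̄` for all `γ` in the footprint. -/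
theorem conservative_hd
    (f : EuclideanSpace ℝ (Fin 2) → ℝ)
    -- horizontal leg positions for each orientation θ, legs ordered CCW
    (q : ℝ → Fin 3 → EuclideanSpace ℝ (Fin 2))
    -- footprint for each orientation, and the unions L and U
    (Ufp : ℝ → Set (EuclideanSpace ℝ (Fin 2)))
    (L U : Set (EuclideanSpace ℝ (Fin 2)))
    (hLegL : ∀ θ i, q θ i ∈ L)
    (hUfpU : ∀ θ, Ufp θ ⊆ U)
    -- Assumption 1: footprint inscribed in the landing-leg polygon
    (hInscribed : ∀ θ, Ufp θ ⊆ convexHull ℝ {q θ 0, q θ 1, q θ 2})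
    -- landing-plane normal n(θ) = (a θ, b θ, c θ) and offset d θ
    (a b c d : ℝ → ℝ)
    (ha : ∀ θ, a θ = (q θ 1 1 - q θ 0 1) * (f (q θ 2) - f (q θ 0))
        - (f (q θ 1) - f (q θ 0)) * (q θ 2 1 - q θ 0 1))
    (hb : ∀ θ, b θ = (f (q θ 1) - f (q θ 0)) * (q θ 2 0 - q θ 0 0)
        - (q θ 1 0 - q θ 0 0) * (f (q θ 2) - f (q θ 0)))
    (hc : ∀ θ, c θ = (q θ 1 0 - q θ 0 0) * (q θ 2 1 - q θ 0 1)
        - (q θ 1 1 - q θ 0 1) * (q θ 2 0 - q θ 0 0))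
    (hccw : ∀ θ, 0 < c θ)
    (hd : ∀ θ, d θ = -(a θ * q θ 0 0 + b θ * q θ 0 1 + c θ * f (q θ 0)))
    -- slope and roughness
    (s : ℝ → ℝ)
    (hs : ∀ θ, s θ = arccos (c θ / Real.sqrt (a θ ^ 2 + b θ ^ 2 + c θ ^ 2)))
    (r : ℝ → EuclideanSpace ℝ (Fin 2) → ℝ)
    (hr : ∀ θ γ, r θ γ = (a θ * γ 0 + b θ * γ 1 + c θ * f γ + d θ) /
        Real.sqrt (a θ ^ 2 + b θ ^ 2 + c θ ^ 2))
    -- extreme elevations over L and U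
    (zLmax zLmin zUmax : ℝ)
    (hzLmax : IsGreatest (f '' L) zLmax)
    (hzLmin : IsLeast (f '' L) zLmin)
    (hzUmax : IsGreatest (f '' U) zUmax)
    -- h₀: minimum altitude over all leg triangles
    (h₀ : ℝ) (hh₀pos : 0 < h₀)
    (hh₀ : ∀ θ, ∀ i j k : Fin 3, i ≠ j → j ≠ k → i ≠ k →
      h₀ ≤ Metric.infDist (q θ i)
        (affineSpan ℝ {q θ j, q θ k} : Set (EuclideanSpace ℝ (Fin 2))))
    -- thresholds
    (sbar rbar : ℝ) (hsbar : sbar ∈ Set.Ioo 0 (π / 2)) (hrbar : 0 < rbar)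
    -- the conservative HD test passes
    (hslopeTest : zLmax - zLmin < h₀ * sin sbar)
    (hroughTest : zUmax - zLmin < rbar) :
    ∀ θ, s θ < sbar ∧ ∀ γ ∈ Ufp θ, r θ γ < rbar := by
  obtain ⟨hsb0, hsb2⟩ := hsbar
  have hsin : 0 < sin sbar := Real.sin_pos_of_pos_of_lt_pi hsb0 (by linarith [Real.pi_pos])
  have hcos0 : 0 ≤ Real.cos sbar := Real.cos_nonneg_of_mem_Icc ⟨by linarith, le_of_lt hsb2⟩
  have hcos1 : Real.cos sbar < 1 := by
    calc Real.cos sbar < Real.cos 0 :=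
      Real.cos_lt_cos_of_nonneg_of_le_pi le_rfl (by linarith [Real.pi_pos]) hsb0
    _ = 1 := Real.cos_zero
  have hpyth : sin sbar ^ 2 + Real.cos sbar ^ 2 = 1 := Real.sin_sq_add_cos_sq sbar
  intro θ
  have hcθ := hccw θ
  -- plane identities
  have pl1 : a θ * (q θ 1 0 - q θ 0 0) + b θ * (q θ 1 1 - q θ 0 1)
      + c θ * (f (q θ 1) - f (q θ 0)) = 0 := by
    rw [ha θ, hb θ, hc θ]; ring
  have pl2 : a θ * (q θ 2 0 - q θ 0 0) + b θ * (q θ 2 1 - q θ 0 1)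
      + c θ * (f (q θ 2) - f (q θ 0)) = 0 := by
    rw [ha θ, hb θ, hc θ]; ring
  -- elevation bounds at legs
  have hfb : ∀ i : Fin 3, zLmin ≤ f (q θ i) ∧ f (q θ i) ≤ zLmax := fun i =>
    ⟨hzLmin.2 ⟨q θ i, hLegL θ i, rfl⟩, hzLmax.2 ⟨q θ i, hLegL θ i, rfl⟩⟩
  have hΔ : (0:ℝ) ≤ zLmax - zLmin := by have := hfb 0; linarith [this.1, this.2]
  -- t-projection bounds
  have hTb : ∀ g g' : ℝ, zLmin ≤ g → g ≤ zLmax → zLmin ≤ g' → g' ≤ zLmax →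
      |c θ * (g - g')| ≤ c θ * (zLmax - zLmin) := by
    intro g g' h1 h2 h3 h4
    rw [abs_mul, abs_of_pos hcθ]
    apply mul_le_mul_of_nonneg_left _ hcθ.le
    rw [abs_le]; constructor <;> linarith
  have ht01 : |(a θ * q θ 0 0 + b θ * q θ 0 1) - (a θ * q θ 1 0 + b θ * q θ 1 1)|
      ≤ c θ * (zLmax - zLmin) := by
    rw [show (a θ * q θ 0 0 + b θ * q θ 0 1) - (a θ * q θ 1 0 + b θ * q θ 1 1)
        = c θ * (f (q θ 1) - f (q θ 0)) from by linarith [pl1]]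
    exact hTb _ _ (hfb 1).1 (hfb 1).2 (hfb 0).1 (hfb 0).2
  have ht02 : |(a θ * q θ 0 0 + b θ * q θ 0 1) - (a θ * q θ 2 0 + b θ * q θ 2 1)|
      ≤ c θ * (zLmax - zLmin) := by
    rw [show (a θ * q θ 0 0 + b θ * q θ 0 1) - (a θ * q θ 2 0 + b θ * q θ 2 1)
        = c θ * (f (q θ 2) - f (q θ 0)) from by linarith [pl2]]
    exact hTb _ _ (hfb 2).1 (hfb 2).2 (hfb 0).1 (hfb 0).2
  have ht12 : |(a θ * q θ 1 0 + b θ * q θ 1 1) - (a θ * q θ 2 0 + b θ * q θ 2 1)|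
      ≤ c θ * (zLmax - zLmin) := by
    rw [show (a θ * q θ 1 0 + b θ * q θ 1 1) - (a θ * q θ 2 0 + b θ * q θ 2 1)
        = c θ * (f (q θ 2) - f (q θ 1)) from by linarith [pl1, pl2]]
    exact hTb _ _ (hfb 2).1 (hfb 2).2 (hfb 1).1 (hfb 1).2
  -- side lengths ≤ c/h₀
  have side01 : Real.sqrt ((q θ 0 0 - q θ 1 0) ^ 2 + (q θ 0 1 - q θ 1 1) ^ 2) ≤ c θ / h₀ := by
    have halt := alt_dist (q θ 2) (q θ 0) (q θ 1) h₀ hh₀pos.le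
      (hh₀ θ 2 0 1 (by decide) (by decide) (by decide))
    rw [show |(q θ 0 0 - q θ 2 0) * (q θ 1 1 - q θ 2 1)
        - (q θ 0 1 - q θ 2 1) * (q θ 1 0 - q θ 2 0)| = c θ from by
      rw [show (q θ 0 0 - q θ 2 0) * (q θ 1 1 - q θ 2 1)
          - (q θ 0 1 - q θ 2 1) * (q θ 1 0 - q θ 2 0) = c θ from by rw [hc θ]; try ring]
      exact abs_of_pos hcθ] at halt
    rw [le_div_iff₀ hh₀pos]
    linarith [halt]
  have side02 : Real.sqrt ((q θ 0 0 - q θ 2 0) ^ 2 + (q θ 0 1 - q θ 2 1) ^ 2) ≤ c θ / h₀ := by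
    have halt := alt_dist (q θ 1) (q θ 0) (q θ 2) h₀ hh₀pos.le
      (hh₀ θ 1 0 2 (by decide) (by decide) (by decide))
    rw [show |(q θ 0 0 - q θ 1 0) * (q θ 2 1 - q θ 1 1)
        - (q θ 0 1 - q θ 1 1) * (q θ 2 0 - q θ 1 0)| = c θ from by
      rw [show (q θ 0 0 - q θ 1 0) * (q θ 2 1 - q θ 1 1)
          - (q θ 0 1 - q θ 1 1) * (q θ 2 0 - q θ 1 0) = -c θ from by rw [hc θ]; ring,
        abs_neg]
      exact abs_of_pos hcθ] at halt
    rw [le_div_iff₀ hh₀pos]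
    linarith [halt]
  have side12 : Real.sqrt ((q θ 1 0 - q θ 2 0) ^ 2 + (q θ 1 1 - q θ 2 1) ^ 2) ≤ c θ / h₀ := by
    have halt := alt_dist (q θ 0) (q θ 1) (q θ 2) h₀ hh₀pos.le
      (hh₀ θ 0 1 2 (by decide) (by decide) (by decide))
    rw [show |(q θ 1 0 - q θ 0 0) * (q θ 2 1 - q θ 0 1)
        - (q θ 1 1 - q θ 0 1) * (q θ 2 0 - q θ 0 0)| = c θ from by
      rw [show (q θ 1 0 - q θ 0 0) * (q θ 2 1 - q θ 0 1)
          - (q θ 1 1 - q θ 0 1) * (q θ 2 0 - q θ 0 0) = c θ from by rw [hc θ]; try ring]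
      exact abs_of_pos hcθ] at halt
    rw [le_div_iff₀ hh₀pos]
    linarith [halt]
  -- u-projection bounds via Cauchy-Schwarz
  have hm0 : (0:ℝ) ≤ Real.sqrt (a θ ^ 2 + b θ ^ 2) := Real.sqrt_nonneg _
  have hub : ∀ i j : Fin 3,
      Real.sqrt ((q θ i 0 - q θ j 0) ^ 2 + (q θ i 1 - q θ j 1) ^ 2) ≤ c θ / h₀ →
      |(a θ * q θ i 1 - b θ * q θ i 0) - (a θ * q θ j 1 - b θ * q θ j 0)|
        ≤ Real.sqrt (a θ ^ 2 + b θ ^ 2) * (c θ / h₀) := by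
    intro i j hside
    calc |(a θ * q θ i 1 - b θ * q θ i 0) - (a θ * q θ j 1 - b θ * q θ j 0)|
        = |a θ * (q θ i 1 - q θ j 1) - b θ * (q θ i 0 - q θ j 0)| := by ring_nf
      _ ≤ Real.sqrt (a θ ^ 2 + b θ ^ 2)
          * Real.sqrt ((q θ i 0 - q θ j 0) ^ 2 + (q θ i 1 - q θ j 1) ^ 2) := cauchy2 _ _ _ _
      _ ≤ Real.sqrt (a θ ^ 2 + b θ ^ 2) * (c θ / h₀) :=
          mul_le_mul_of_nonneg_left hside hm0
  have hu01 := hub 0 1 side01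
  have hu02 := hub 0 2 side02
  have hu12 := hub 1 2 side12
  -- apply the median determinant lemma
  have hdet := median_det
    (a θ * q θ 0 0 + b θ * q θ 0 1) (a θ * q θ 1 0 + b θ * q θ 1 1)
    (a θ * q θ 2 0 + b θ * q θ 2 1)
    (a θ * q θ 0 1 - b θ * q θ 0 0) (a θ * q θ 1 1 - b θ * q θ 1 0)
    (a θ * q θ 2 1 - b θ * q θ 2 0)
    (c θ * (zLmax - zLmin)) (Real.sqrt (a θ ^ 2 + b θ ^ 2) * (c θ / h₀))
    ht01 ht02 ht12 hu01 hu02 hu12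
  have hdetval : ((a θ * q θ 1 0 + b θ * q θ 1 1) - (a θ * q θ 0 0 + b θ * q θ 0 1))
        * ((a θ * q θ 2 1 - b θ * q θ 2 0) - (a θ * q θ 0 1 - b θ * q θ 0 0))
      - ((a θ * q θ 1 1 - b θ * q θ 1 0) - (a θ * q θ 0 1 - b θ * q θ 0 0))
        * ((a θ * q θ 2 0 + b θ * q θ 2 1) - (a θ * q θ 0 0 + b θ * q θ 0 1))
      = (a θ ^ 2 + b θ ^ 2) * c θ := by rw [hc θ]; ring
  rw [hdetval, abs_of_nonneg (by positivity : (0:ℝ) ≤ (a θ ^ 2 + b θ ^ 2) * c θ)] at hdet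
  -- conclude m < c sin sbar
  have hmlt : Real.sqrt (a θ ^ 2 + b θ ^ 2) < c θ * sin sbar := by
    set m := Real.sqrt (a θ ^ 2 + b θ ^ 2) with hm
    have hm2 : m ^ 2 = a θ ^ 2 + b θ ^ 2 := Real.sq_sqrt (by positivity)
    rcases eq_or_lt_of_le hm0 with h0 | h0
    · rw [← h0]; positivity
    · -- hdet : m^2 * c ≤ (cΔ) * (m * (c/h₀))
      rw [← hm2] at hdet
      have e : c θ * (zLmax - zLmin) * (m * (c θ / h₀)) * h₀
          = c θ * (zLmax - zLmin) * (m * c θ) := by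
        field_simp
      have h1 : m ^ 2 * c θ * h₀ ≤ c θ * (zLmax - zLmin) * (m * c θ) := by
        rw [← e]
        exact mul_le_mul_of_nonneg_right hdet hh₀pos.le
      have h2 : m * h₀ ≤ c θ * (zLmax - zLmin) := by
        nlinarith [h1, mul_pos h0 hcθ]
      nlinarith [h2, mul_lt_mul_of_pos_left hslopeTest hcθ, hh₀pos]
  constructor
  · -- slope
    rw [hs θ]
    have hst0 : (0:ℝ) < Real.sqrt (a θ ^ 2 + b θ ^ 2 + c θ ^ 2) := by
      apply Real.sqrt_pos.2; positivity
    have hst2 : Real.sqrt (a θ ^ 2 + b θ ^ 2 + c θ ^ 2) ^ 2 = a θ ^ 2 + b θ ^ 2 + c θ ^ 2 :=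
      Real.sq_sqrt (by positivity)
    have hm2 : Real.sqrt (a θ ^ 2 + b θ ^ 2) ^ 2 = a θ ^ 2 + b θ ^ 2 :=
      Real.sq_sqrt (by positivity)
    have hvpos : 0 < c θ / Real.sqrt (a θ ^ 2 + b θ ^ 2 + c θ ^ 2) := by positivity
    have hvle1 : c θ / Real.sqrt (a θ ^ 2 + b θ ^ 2 + c θ ^ 2) ≤ 1 :=
      div_sqrt_le_one _ _ _ hcθ
    have hvgt : Real.cos sbar < c θ / Real.sqrt (a θ ^ 2 + b θ ^ 2 + c θ ^ 2) :=
      cos_lt_div _ _ _ _ _ hcθ hcos0 hpyth hmlt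
    have harc : arccos (c θ / Real.sqrt (a θ ^ 2 + b θ ^ 2 + c θ ^ 2))
        < arccos (Real.cos sbar) :=
      Real.strictAntiOn_arccos ⟨by linarith, le_of_lt hcos1⟩ ⟨by linarith, hvle1⟩ hvgt
    rwa [Real.arccos_cos hsb0.le (by linarith [Real.pi_pos] : sbar ≤ π)] at harc
  · -- roughness
    intro γ hγ
    rw [hr θ γ]
    have hst0 : (0:ℝ) < Real.sqrt (a θ ^ 2 + b θ ^ 2 + c θ ^ 2) := by
      apply Real.sqrt_pos.2; positivity
    have hcle : c θ ≤ Real.sqrt (a θ ^ 2 + b θ ^ 2 + c θ ^ 2) := by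
      have := Real.sq_sqrt (by positivity : (0:ℝ) ≤ a θ ^ 2 + b θ ^ 2 + c θ ^ 2)
      nlinarith [hst0, hcθ]
    -- half-space argument: a γ0 + b γ1 + d ≤ -c zLmin on the hull
    have hhalf : a θ * γ 0 + b θ * γ 1 + d θ ≤ -(c θ * zLmin) := by
      have hconv : Convex ℝ {x : EuclideanSpace ℝ (Fin 2) |
          a θ * x 0 + b θ * x 1 + d θ ≤ -(c θ * zLmin)} := by
        have hlin : IsLinearMap ℝ (fun x : EuclideanSpace ℝ (Fin 2) => a θ * x 0 + b θ * x 1) := by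
          constructor
          · intro x y; simp [PiLp.add_apply]; ring
          · intro k x; simp [PiLp.smul_apply, smul_eq_mul]; ring
        have := convex_halfSpace_le hlin (-(c θ * zLmin) - d θ)
        rw [show {x : EuclideanSpace ℝ (Fin 2) | a θ * x 0 + b θ * x 1 + d θ ≤ -(c θ * zLmin)}
            = {w : EuclideanSpace ℝ (Fin 2) | a θ * w 0 + b θ * w 1 ≤ -(c θ * zLmin) - d θ} from
          Set.ext fun x => by simp only [Set.mem_setOf_eq]; constructor <;> intro h <;> linarith]
        exact this
      have hsub : {q θ 0, q θ 1, q θ 2} ⊆ {x : EuclideanSpace ℝ (Fin 2) |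
          a θ * x 0 + b θ * x 1 + d θ ≤ -(c θ * zLmin)} := by
        rintro x (rfl | rfl | rfl)
        · rw [hd θ]
          simp only [Set.mem_setOf_eq]
          linarith [mul_le_mul_of_nonneg_left (hfb 0).1 hcθ.le]
        · rw [hd θ]
          simp only [Set.mem_setOf_eq]
          linarith [mul_le_mul_of_nonneg_left (hfb 1).1 hcθ.le, pl1]
        · rw [hd θ]
          simp only [Set.mem_setOf_eq]
          linarith [mul_le_mul_of_nonneg_left (hfb 2).1 hcθ.le, pl2]
      exact convexHull_min hsub hconv (hInscribed θ hγ)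
    have hfγ : f γ ≤ zUmax := hzUmax.2 ⟨γ, hUfpU θ hγ, rfl⟩
    have hnum : a θ * γ 0 + b θ * γ 1 + c θ * f γ + d θ ≤ c θ * (zUmax - zLmin) := by
      linarith [hhalf, mul_le_mul_of_nonneg_left hfγ hcθ.le]
    rcases le_or_gt (zUmax - zLmin) 0 with hQ | hQ
    · have : a θ * γ 0 + b θ * γ 1 + c θ * f γ + d θ ≤ 0 := by
        linarith [hnum, mul_nonpos_of_nonneg_of_nonpos hcθ.le hQ]
      calc (a θ * γ 0 + b θ * γ 1 + c θ * f γ + d θ) / Real.sqrt (a θ ^ 2 + b θ ^ 2 + c θ ^ 2)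
          ≤ 0 := div_nonpos_of_nonpos_of_nonneg this hst0.le
        _ < rbar := hrbar
    · calc (a θ * γ 0 + b θ * γ 1 + c θ * f γ + d θ) / Real.sqrt (a θ ^ 2 + b θ ^ 2 + c θ ^ 2)
          ≤ c θ * (zUmax - zLmin) / Real.sqrt (a θ ^ 2 + b θ ^ 2 + c θ ^ 2) :=
            (div_le_div_iff_of_pos_right hst0).mpr hnum
        _ ≤ zUmax - zLmin := by
            rw [div_le_iff₀ hst0]
            linarith [mul_le_mul_of_nonneg_left hcle hQ.le]
        _ < rbar := hroughTest
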